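/- arXiv:2410.06383 — 4 statements merged into one kernel-verified Lean document; each statement's English description precedes it below -/
import Mathlib

section
/- For all real b > 0, c > 0 and α > 0: the integral ∫₀^∞ (b^{1+α}/Γ(1+α)) · y^α · exp(−b·y − c·y²) dy is at most 1 and at least exp(−c·b^{1/2}) · (1 − Γ(1+α, b^{5/4})/Γ(1+α)), where Γ(1+α, x) = ∫ₓ^∞ ξ^α e^{−ξ} dξ is the upper incomplete Gamma function. -/
open MeasureTheory Set

/-- Upper incomplete Gamma function `Γ(s, x) = ∫ₓ^∞ ξ^{s−1} e^{−ξ} dξ`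
(here given directly for exponent `α`, i.e. `Γ(1+α, x) = ∫ₓ^∞ ξ^α e^{−ξ} dξ`). -/
noncomputable def upperIncGamma (α x : ℝ) : ℝ :=
  ∫ ξ in Ioi x, ξ ^ α * Real.exp (-ξ)

-- integrability of ξ^α e^{-ξ} on Ioi 0
lemma gammaInt (α : ℝ) (hα : 0 < α) :
    IntegrableOn (fun ξ : ℝ => ξ ^ α * Real.exp (-ξ)) (Ioi 0) := by
  have h := Real.GammaIntegral_convergent (s := α + 1) (by linarith)
  refine h.congr_fun (fun x hx => ?_) measurableSet_Ioi
  rw [add_sub_cancel_right, mul_comm]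

lemma gammaVal (α : ℝ) (hα : 0 < α) :
    ∫ ξ in Ioi (0:ℝ), ξ ^ α * Real.exp (-ξ) = Real.Gamma (1 + α) := by
  rw [Real.Gamma_eq_integral (by linarith : (0:ℝ) < 1 + α)]
  refine setIntegral_congr_fun measurableSet_Ioi (fun x hx => ?_)
  rw [add_sub_cancel_left, mul_comm]

lemma substAux (b α a : ℝ) (hb : 0 < b) (ha : 0 ≤ a) :
    ∫ x in Ioi a, x ^ α * Real.exp (-(b * x))
      = b ^ (-(1 + α)) * ∫ ξ in Ioi (b * a), ξ ^ α * Real.exp (-ξ) := by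
  have h := integral_comp_mul_left_Ioi (fun ξ : ℝ => ξ ^ α * Real.exp (-ξ)) a hb
  have h2 : (∫ x in Ioi a, (b * x) ^ α * Real.exp (-(b * x)))
      = b ^ α * ∫ x in Ioi a, x ^ α * Real.exp (-(b * x)) := by
    rw [← integral_const_mul]
    refine setIntegral_congr_fun measurableSet_Ioi (fun x hx => ?_)
    rw [Real.mul_rpow hb.le (le_trans ha (le_of_lt hx))]
    ring
  rw [h2, smul_eq_mul] at h
  have hbα : (0:ℝ) < b ^ α := Real.rpow_pos_of_pos hb _
  have hLHS : (∫ x in Ioi a, x ^ α * Real.exp (-(b * x)))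
      = (b ^ α)⁻¹ * (b⁻¹ * ∫ ξ in Ioi (b * a), ξ ^ α * Real.exp (-ξ)) := by
    rw [← h, ← mul_assoc, inv_mul_cancel₀ hbα.ne', one_mul]
  rw [hLHS, Real.rpow_neg hb.le, Real.rpow_add hb, Real.rpow_one]
  ring

theorem stmt3 (b c α : ℝ) (hb : 0 < b) (hc : 0 < c) (hα : 0 < α) :
    (∫ y in Ioi (0:ℝ),
        b ^ (1 + α) / Real.Gamma (1 + α) * y ^ α * Real.exp (-b * y - c * y ^ 2)) ≤ 1 ∧
    Real.exp (-c * b ^ ((1:ℝ)/2)) * (1 - upperIncGamma α (b ^ ((5:ℝ)/4)) / Real.Gamma (1 + α)) ≤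
      ∫ y in Ioi (0:ℝ),
        b ^ (1 + α) / Real.Gamma (1 + α) * y ^ α * Real.exp (-b * y - c * y ^ 2) := by
  have hG : 0 < Real.Gamma (1 + α) := Real.Gamma_pos_of_pos (by linarith)
  set K : ℝ := b ^ (1 + α) / Real.Gamma (1 + α) with hK
  have hKpos : 0 < K := div_pos (Real.rpow_pos_of_pos hb _) hG
  set f : ℝ → ℝ := fun y => y ^ α * Real.exp (-b * y - c * y ^ 2) with hf
  set g : ℝ → ℝ := fun y => y ^ α * Real.exp (-(b * y)) with hg
  -- measurability
  have hmf : AEStronglyMeasurable f (volume.restrict (Ioi (0:ℝ))) := by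
    apply Measurable.aestronglyMeasurable
    fun_prop
  -- integrability of g on Ioi 0
  have hgInt : IntegrableOn g (Ioi (0:ℝ)) := by
    have := integrableOn_rpow_mul_exp_neg_mul_rpow (p := 1) (s := α) (b := b)
      (by linarith) one_pos hb
    refine this.congr_fun (fun x hx => ?_) measurableSet_Ioi
    simp only [pow_one, Real.rpow_one, neg_mul, hg]
  -- integrability of f on Ioi 0
  have hfg : ∀ y ∈ Ioi (0:ℝ), f y ≤ g y := by
    intro y hy
    have hy0 : (0:ℝ) < y := hy
    have : Real.exp (-b * y - c * y ^ 2) ≤ Real.exp (-(b * y)) := by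
      apply Real.exp_le_exp.mpr; nlinarith [sq_nonneg y]
    exact mul_le_mul_of_nonneg_left this (Real.rpow_nonneg hy0.le _)
  have hfpos : ∀ y ∈ Ioi (0:ℝ), 0 ≤ f y := fun y hy =>
    mul_nonneg (Real.rpow_nonneg (le_of_lt hy) _) (Real.exp_pos _).le
  have hfInt : IntegrableOn f (Ioi (0:ℝ)) := by
    refine Integrable.mono' hgInt hmf ?_
    filter_upwards [ae_restrict_mem measurableSet_Ioi] with y hy
    rw [Real.norm_eq_abs, abs_of_nonneg (hfpos y hy)]
    exact hfg y hy
  -- value of ∫ g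
  have hgVal : ∫ y in Ioi (0:ℝ), g y = b ^ (-(1 + α)) * Real.Gamma (1 + α) := by
    have := substAux b α 0 hb le_rfl
    rw [mul_zero] at this
    rw [hg]; rw [this, gammaVal α hα]
  -- rewrite main integral
  have hmain : (∫ y in Ioi (0:ℝ), K * y ^ α * Real.exp (-b * y - c * y ^ 2))
      = K * ∫ y in Ioi (0:ℝ), f y := by
    rw [← integral_const_mul]
    refine setIntegral_congr_fun measurableSet_Ioi (fun y hy => ?_)
    simp [hf, mul_assoc]
  have hKb : K * (b ^ (-(1 + α))) * Real.Gamma (1 + α) = 1 := by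
    rw [hK, Real.rpow_neg hb.le]
    field_simp
  constructor
  · rw [hmain]
    have h1 : (∫ y in Ioi (0:ℝ), f y) ≤ ∫ y in Ioi (0:ℝ), g y :=
      setIntegral_mono_on hfInt hgInt measurableSet_Ioi hfg
    calc K * ∫ y in Ioi (0:ℝ), f y ≤ K * ∫ y in Ioi (0:ℝ), g y := by
          exact mul_le_mul_of_nonneg_left h1 hKpos.le
      _ = 1 := by rw [hgVal, ← mul_assoc, hKb]
  · rw [hmain]
    set r : ℝ := b ^ ((1:ℝ)/4) with hr
    have hrpos : 0 < r := Real.rpow_pos_of_pos hb _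
    have hbr : b * r = b ^ ((5:ℝ)/4) := by
      rw [hr]
      nth_rewrite 1 [show b = b ^ (1:ℝ) by rw [Real.rpow_one]]
      rw [← Real.rpow_add hb]; norm_num
    have hr2 : r ^ 2 = b ^ ((1:ℝ)/2) := by
      rw [hr, ← Real.rpow_natCast (b ^ ((1:ℝ)/4)) 2, ← Real.rpow_mul hb.le]
      norm_num
    -- integral of g on Ioi r
    have hIoiR : ∫ y in Ioi r, g y = b ^ (-(1 + α)) * upperIncGamma α (b ^ ((5:ℝ)/4)) := by
      have := substAux b α r hb hrpos.le
      rw [hbr] at this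
      exact this
    -- split: ∫ Ioc 0 r g = b^{-(1+α)} (Γ - U)
    have hsplit : ∫ y in Ioc (0:ℝ) r, g y
        = b ^ (-(1 + α)) * (Real.Gamma (1 + α) - upperIncGamma α (b ^ ((5:ℝ)/4))) := by
      have hu : Ioc (0:ℝ) r ∪ Ioi r = Ioi 0 := Ioc_union_Ioi_eq_Ioi hrpos.le
      have hd : Disjoint (Ioc (0:ℝ) r) (Ioi r) := Ioc_disjoint_Ioi le_rfl
      have h1 : IntegrableOn g (Ioc (0:ℝ) r) := hgInt.mono_set Ioc_subset_Ioi_self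
      have h2 : IntegrableOn g (Ioi r) := hgInt.mono_set (Ioi_subset_Ioi hrpos.le)
      have := setIntegral_union hd measurableSet_Ioi h1 h2 (f := g) (μ := volume)
      rw [hu] at this
      rw [hgVal, hIoiR] at this
      linarith [this]
    -- pointwise bound on Ioc 0 r
    have hpt : ∀ y ∈ Ioc (0:ℝ) r, Real.exp (-c * b ^ ((1:ℝ)/2)) * g y ≤ f y := by
      intro y hy
      obtain ⟨hy0, hyr⟩ := hy
      have hy2 : y ^ 2 ≤ b ^ ((1:ℝ)/2) := by
        rw [← hr2]; nlinarith
      have : Real.exp (-c * b ^ ((1:ℝ)/2)) * Real.exp (-(b * y))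
          ≤ Real.exp (-b * y - c * y ^ 2) := by
        rw [← Real.exp_add]
        apply Real.exp_le_exp.mpr
        nlinarith
      calc Real.exp (-c * b ^ ((1:ℝ)/2)) * g y
          = y ^ α * (Real.exp (-c * b ^ ((1:ℝ)/2)) * Real.exp (-(b * y))) := by
            rw [hg]; ring
        _ ≤ y ^ α * Real.exp (-b * y - c * y ^ 2) :=
            mul_le_mul_of_nonneg_left this (Real.rpow_nonneg hy0.le _)
    -- chain
    have hL1 : Real.exp (-c * b ^ ((1:ℝ)/2)) * ∫ y in Ioc (0:ℝ) r, g y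
        ≤ ∫ y in Ioc (0:ℝ) r, f y := by
      rw [← integral_const_mul]
      refine setIntegral_mono_on ?_ (hfInt.mono_set Ioc_subset_Ioi_self) measurableSet_Ioc hpt
      exact (hgInt.mono_set Ioc_subset_Ioi_self).const_mul _
    have hL2 : (∫ y in Ioc (0:ℝ) r, f y) ≤ ∫ y in Ioi (0:ℝ), f y := by
      refine setIntegral_mono_set hfInt ?_ ?_
      · filter_upwards [ae_restrict_mem measurableSet_Ioi] with y hy using hfpos y hy
      · exact HasSubset.Subset.eventuallyLE Ioc_subset_Ioi_self
    have key : Real.exp (-c * b ^ ((1:ℝ)/2))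
        * (b ^ (-(1 + α)) * (Real.Gamma (1 + α) - upperIncGamma α (b ^ ((5:ℝ)/4))))
        ≤ ∫ y in Ioi (0:ℝ), f y := by
      rw [← hsplit]; exact le_trans hL1 hL2
    have hfin := mul_le_mul_of_nonneg_left key hKpos.le
    have hKB : K * b ^ (-(1 + α)) = 1 / Real.Gamma (1 + α) := by
      rw [eq_div_iff hG.ne']; exact hKb
    calc Real.exp (-c * b ^ ((1:ℝ)/2)) * (1 - upperIncGamma α (b ^ ((5:ℝ)/4)) / Real.Gamma (1 + α))
        = K * (Real.exp (-c * b ^ ((1:ℝ)/2))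
            * (b ^ (-(1 + α)) * (Real.Gamma (1 + α) - upperIncGamma α (b ^ ((5:ℝ)/4))))) := by
          rw [show K * (Real.exp (-c * b ^ ((1:ℝ)/2))
              * (b ^ (-(1 + α)) * (Real.Gamma (1 + α) - upperIncGamma α (b ^ ((5:ℝ)/4)))))
              = Real.exp (-c * b ^ ((1:ℝ)/2)) * ((K * b ^ (-(1 + α)))
              * (Real.Gamma (1 + α) - upperIncGamma α (b ^ ((5:ℝ)/4)))) from by ring, hKB]
          field_simp
      _ ≤ K * ∫ y in Ioi (0:ℝ), f y := hfin
end

section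
/- Let c_n, γ_n, δ_n be positive real sequences with c_n → ∞ and c_n^{1/2}·γ_n/δ_n → ρ ∈ (0,∞), and let α > 0. Then lim_{n→∞} (1/Ai(c_n)) · ∫₀^∞ (δ_n^{1+α}/Γ(1+α)) · e^{−δ_n x} · x^α · Ai(c_n + γ_n x) dx = (1+ρ)^{−1−α}, where Ai is the Airy function. -/
open MeasureTheory Set Filter

namespace Stmt4Aux

noncomputable def Es (y : ℝ) : ℝ :=
  y ^ (-(1:ℝ)/4) * (Real.exp (-(2/3) * y ^ ((3:ℝ)/2)) / Real.sqrt (4 * Real.pi))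

lemma sqrt4pi_pos : 0 < Real.sqrt (4 * Real.pi) :=
  Real.sqrt_pos.2 (by positivity)

lemma Es_pos {y : ℝ} (hy : 0 < y) : 0 < Es y :=
  mul_pos (Real.rpow_pos_of_pos hy _) (div_pos (Real.exp_pos _) sqrt4pi_pos)

lemma rpow32_eq {a : ℝ} (ha : 0 ≤ a) : a ^ ((3:ℝ)/2) = Real.sqrt a ^ 3 := by
  rw [Real.sqrt_eq_rpow, ← Real.rpow_natCast (a ^ ((1:ℝ)/2)) 3, ← Real.rpow_mul ha]
  norm_num

lemma rpow_neg32 {a : ℝ} (ha : 0 ≤ a) : a ^ (-(3:ℝ)/2) = (a ^ ((3:ℝ)/2))⁻¹ := by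
  rw [show (-(3:ℝ)/2) = -((3:ℝ)/2) by ring, Real.rpow_neg ha]

lemma neg32_le {y : ℝ} (hy : 4 ≤ y) : y ^ (-(3:ℝ)/2) ≤ 1/8 := by
  have h0 : (0:ℝ) ≤ y := by linarith
  rw [rpow_neg32 h0]
  have hsq : Real.sqrt 4 = 2 := by
    rw [show (4:ℝ) = 2^2 by norm_num, Real.sqrt_sq (by norm_num : (0:ℝ) ≤ 2)]
  have h8 : (8:ℝ) ≤ y ^ ((3:ℝ)/2) := by
    calc (8:ℝ) = 4 ^ ((3:ℝ)/2) := by rw [rpow32_eq (by norm_num : (0:ℝ) ≤ 4), hsq]; norm_num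
    _ ≤ y ^ ((3:ℝ)/2) := Real.rpow_le_rpow (by norm_num) hy (by norm_num)
  rw [show (1:ℝ)/8 = 8⁻¹ by norm_num]
  exact inv_anti₀ (by norm_num) h8

lemma neg32_nonneg {y : ℝ} (hy : 4 ≤ y) : 0 ≤ y ^ (-(3:ℝ)/2) :=
  Real.rpow_nonneg (by linarith) _

lemma threshold_lt {y : ℝ} (hy : 4 ≤ y) : ((3:ℝ)/2) ^ ((2:ℝ)/3) < y := by
  calc ((3:ℝ)/2) ^ ((2:ℝ)/3) ≤ ((3:ℝ)/2) ^ (1:ℝ) :=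
        Real.rpow_le_rpow_of_exponent_le (by norm_num) (by norm_num)
  _ = 3/2 := Real.rpow_one _
  _ < y := by linarith

lemma delta_lb {a s : ℝ} (ha : 0 ≤ a) (hs : 0 ≤ s) :
    Real.sqrt a * s ≤ 2/3 * ((a+s) ^ ((3:ℝ)/2) - a ^ ((3:ℝ)/2)) := by
  rw [rpow32_eq ha, rpow32_eq (by linarith)]
  set u := Real.sqrt a with hu_def
  set v := Real.sqrt (a+s) with hv_def
  have hu : 0 ≤ u := Real.sqrt_nonneg _
  have huv : u ≤ v := Real.sqrt_le_sqrt (by linarith)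
  have hu2 : u^2 = a := Real.sq_sqrt ha
  have hv2 : v^2 = a+s := Real.sq_sqrt (by linarith)
  have hs' : s = v^2 - u^2 := by rw [hu2, hv2]; ring
  rw [hs']
  nlinarith [mul_nonneg (sq_nonneg (v-u)) (by linarith : (0:ℝ) ≤ 2*v+u)]

lemma delta_ub {a s : ℝ} (ha : 0 ≤ a) (hs : 0 ≤ s) :
    2/3 * ((a+s) ^ ((3:ℝ)/2) - a ^ ((3:ℝ)/2)) ≤ Real.sqrt (a+s) * s := by
  rw [rpow32_eq ha, rpow32_eq (by linarith)]
  set u := Real.sqrt a with hu_def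
  set v := Real.sqrt (a+s) with hv_def
  have hu : 0 ≤ u := Real.sqrt_nonneg _
  have huv : u ≤ v := Real.sqrt_le_sqrt (by linarith)
  have hu2 : u^2 = a := Real.sq_sqrt ha
  have hv2 : v^2 = a+s := Real.sq_sqrt (by linarith)
  have hs' : s = v^2 - u^2 := by rw [hu2, hv2]; ring
  rw [hs']
  nlinarith [mul_nonneg (sq_nonneg (v-u)) (by linarith : (0:ℝ) ≤ v+2*u)]

lemma delta_nonneg {a s : ℝ} (ha : 0 ≤ a) (hs : 0 ≤ s) :
    0 ≤ 2/3 * ((a+s) ^ ((3:ℝ)/2) - a ^ ((3:ℝ)/2)) :=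
  le_trans (mul_nonneg (Real.sqrt_nonneg a) hs) (delta_lb ha hs)

lemma Es_ratio {a s : ℝ} (ha : 0 < a) (hs : 0 ≤ s) :
    Es (a+s) = Es a *
      (((a+s)/a) ^ (-(1:ℝ)/4) *
        Real.exp (-(2/3 * ((a+s) ^ ((3:ℝ)/2) - a ^ ((3:ℝ)/2))))) := by
  unfold Es
  have hA : (a:ℝ) ^ (-(1:ℝ)/4) ≠ 0 := (Real.rpow_pos_of_pos ha _).ne'
  have hS : Real.sqrt (4*Real.pi) ≠ 0 := sqrt4pi_pos.ne'
  rw [Real.div_rpow (by linarith) ha.le]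
  have hexp : Real.exp (-(2/3) * (a+s) ^ ((3:ℝ)/2)) =
      Real.exp (-(2/3) * a ^ ((3:ℝ)/2)) *
        Real.exp (-(2/3 * ((a+s) ^ ((3:ℝ)/2) - a ^ ((3:ℝ)/2)))) := by
    rw [← Real.exp_add]; congr 1; ring
  rw [hexp]
  field_simp

end Stmt4Aux

open Stmt4Aux

/-- the Airy-kernel Laplace asymptotics. Since the Airy function is not
available in Mathlib, `Ai` is any function satisfying the standard asymptotic bounds
`(1 − (3/2)y^{−3/2}) y^{−1/4} e^{−(2/3)y^{3/2}}/√(4π) ≤ Ai(y) ≤ y^{−1/4} e^{−(2/3)y^{3/2}}/√(4π)`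
for `y > (3/2)^{2/3}`. -/
theorem stmt4 (Ai : ℝ → ℝ) (hAi : Continuous Ai)
    (hAi_lb : ∀ y : ℝ, ((3:ℝ)/2) ^ ((2:ℝ)/3) < y →
      (1 - (3/2) * y ^ (-(3:ℝ)/2)) * y ^ (-(1:ℝ)/4) *
        (Real.exp (-(2/3) * y ^ ((3:ℝ)/2)) / Real.sqrt (4 * Real.pi)) ≤ Ai y)
    (hAi_ub : ∀ y : ℝ, ((3:ℝ)/2) ^ ((2:ℝ)/3) < y →
      Ai y ≤ y ^ (-(1:ℝ)/4) * (Real.exp (-(2/3) * y ^ ((3:ℝ)/2)) / Real.sqrt (4 * Real.pi)))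
    (c γ δ : ℕ → ℝ) (hc : ∀ n, 0 < c n) (hγ : ∀ n, 0 < γ n) (hδ : ∀ n, 0 < δ n)
    (hc_top : Tendsto c atTop atTop)
    (ρ : ℝ) (hρ : 0 < ρ)
    (hratio : Tendsto (fun n => (c n) ^ ((1:ℝ)/2) * γ n / δ n) atTop (nhds ρ))
    (α : ℝ) (hα : 0 < α) :
    Tendsto (fun n =>
        (1 / Ai (c n)) *
          ∫ x in Ioi (0:ℝ),
            (δ n) ^ (1 + α) / Real.Gamma (1 + α) * Real.exp (-(δ n) * x) * x ^ α *
              Ai (c n + γ n * x))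
      atTop (nhds ((1 + ρ) ^ (-1 - α))) := by
  have h1ρ : (0:ℝ) < 1 + ρ := by linarith
  have hΓ : 0 < Real.Gamma (1 + α) := Real.Gamma_pos_of_pos (by linarith)
  -- basic Airy bounds in terms of Es
  have hAiub' : ∀ y, 4 ≤ y → Ai y ≤ Es y := fun y hy => hAi_ub y (threshold_lt hy)
  have hAilb' : ∀ y, 4 ≤ y → (1 - 3/2 * y ^ (-(3:ℝ)/2)) * Es y ≤ Ai y := by
    intro y hy
    have h := hAi_lb y (threshold_lt hy)
    unfold Es
    rw [← mul_assoc]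
    exact h
  have hfactor : ∀ y : ℝ, 4 ≤ y → (1:ℝ)/2 ≤ 1 - 3/2 * y ^ (-(3:ℝ)/2) := by
    intro y hy
    have h1 := neg32_le hy
    have h2 := neg32_nonneg hy
    linarith
  have hhalf : ∀ y, 4 ≤ y → Es y / 2 ≤ Ai y := by
    intro y hy
    have h1 := hAilb' y hy
    have h2 := hfactor y hy
    have hE := (Es_pos (show (0:ℝ) < y by linarith)).le
    nlinarith
  have hAipos : ∀ y, 4 ≤ y → 0 < Ai y := by
    intro y hy
    have hE := Es_pos (show (0:ℝ) < y by linarith)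
    have := hhalf y hy
    linarith
  -- global tendsto facts
  have hsqrt_top : Tendsto (fun n => Real.sqrt (c n)) atTop atTop := by
    refine ((tendsto_rpow_atTop (by norm_num : (0:ℝ) < 1/2)).comp hc_top).congr fun n => ?_
    simp [Function.comp, Real.sqrt_eq_rpow]
  have hr1 : Tendsto (fun n => Real.sqrt (c n) * (γ n / δ n)) atTop (nhds ρ) := by
    refine hratio.congr fun n => ?_
    rw [Real.sqrt_eq_rpow, mul_div_assoc]
  have h32top : Tendsto (fun n => (c n) ^ ((3:ℝ)/2)) atTop atTop :=
    (tendsto_rpow_atTop (by norm_num : (0:ℝ) < 3/2)).comp hc_top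
  have hβc : Tendsto (fun n => (γ n / δ n) / c n) atTop (nhds 0) := by
    refine (hr1.div_atTop h32top).congr fun n => ?_
    have hcn := hc n
    have hs : 0 < Real.sqrt (c n) := Real.sqrt_pos.2 hcn
    have h2 : Real.sqrt (c n) ^ 2 = c n := Real.sq_sqrt hcn.le
    rw [rpow32_eq hcn.le, pow_succ, h2, mul_comm (c n) (Real.sqrt (c n)),
      mul_div_mul_left _ _ hs.ne']
  have hm1 : Tendsto (fun n => 1 - 3/2 * (c n) ^ (-(3:ℝ)/2)) atTop (nhds 1) := by
    have h0 : Tendsto (fun n => (c n) ^ (-(3:ℝ)/2)) atTop (nhds 0) := by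
      refine ((tendsto_rpow_neg_atTop (by norm_num : (0:ℝ) < 3/2)).comp hc_top).congr
        fun n => ?_
      simp only [Function.comp_apply]
      norm_num
    have h : Tendsto (fun n => 1 - 3/2 * (c n) ^ (-(3:ℝ)/2)) atTop (nhds (1 - 3/2 * 0)) :=
      tendsto_const_nhds.sub (h0.const_mul (3/2 : ℝ))
    simpa using h
  -- the normalized integrand after change of variables
  set F : ℕ → ℝ → ℝ := fun n t =>
    (1 / Ai (c n)) * (Real.exp (-t) * t ^ α / Real.Gamma (1 + α) * Ai (c n + γ n / δ n * t))
    with hF_def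
  set G : ℝ → ℝ := fun t =>
    Real.exp (-t) * t ^ α / Real.Gamma (1 + α) * Real.exp (-(ρ * t)) with hG_def
  -- Step A: change of variables
  have stepA : ∀ n,
      (1 / Ai (c n)) * ∫ x in Ioi (0:ℝ),
          (δ n) ^ (1 + α) / Real.Gamma (1 + α) * Real.exp (-(δ n) * x) * x ^ α *
            Ai (c n + γ n * x)
        = ∫ t in Ioi (0:ℝ), F n t := by
    intro n
    have hδn := hδ n
    have hchg : (∫ x in Ioi (0:ℝ),
        (δ n) ^ (1 + α) / Real.Gamma (1 + α) * Real.exp (-(δ n) * x) * x ^ α *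
          Ai (c n + γ n * x))
        = ∫ t in Ioi (0:ℝ),
            Real.exp (-t) * t ^ α / Real.Gamma (1 + α) * Ai (c n + γ n / δ n * t) := by
      have h1 : EqOn
          (fun x => (δ n) ^ (1 + α) / Real.Gamma (1 + α) * Real.exp (-(δ n) * x) * x ^ α *
            Ai (c n + γ n * x))
          (fun x => δ n * (Real.exp (-(δ n * x)) * (δ n * x) ^ α / Real.Gamma (1 + α) *
            Ai (c n + γ n / δ n * (δ n * x)))) (Ioi 0) := by
        intro x hx
        simp only
        rw [Real.mul_rpow hδn.le (le_of_lt hx), Real.rpow_add hδn, Real.rpow_one]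
        have h2 : γ n / δ n * (δ n * x) = γ n * x := by field_simp
        rw [h2, neg_mul]
        ring
      rw [setIntegral_congr_fun measurableSet_Ioi h1, MeasureTheory.integral_const_mul,
        integral_comp_mul_left_Ioi
          (fun t => Real.exp (-t) * t ^ α / Real.Gamma (1 + α) * Ai (c n + γ n / δ n * t))
          0 hδn, mul_zero, smul_eq_mul, ← mul_assoc, mul_inv_cancel₀ hδn.ne', one_mul]
    rw [hchg, ← MeasureTheory.integral_const_mul]
  -- pointwise limit
  have hlim : ∀ t : ℝ, t ∈ Ioi (0:ℝ) → Tendsto (fun n => F n t) atTop (nhds (G t)) := by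
    intro t ht
    have ht0 : (0:ℝ) < t := ht
    have hspos : ∀ n, 0 < γ n / δ n * t := fun n => by
      have := hγ n; have := hδ n; positivity
    have hst : Tendsto (fun n => Real.sqrt (c n) * (γ n / δ n * t)) atTop (nhds (ρ * t)) := by
      refine (hr1.mul_const t).congr fun n => by ring
    have hsc : Tendsto (fun n => (γ n / δ n * t) / c n) atTop (nhds 0) := by
      have h := hβc.mul_const t
      rw [zero_mul] at h
      refine h.congr fun n => by ring
    have hratio1 : Tendsto (fun n => (c n + γ n / δ n * t) / c n) atTop (nhds 1) := by
      have h : Tendsto (fun n => 1 + (γ n / δ n * t) / c n) atTop (nhds (1 + 0)) :=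
        tendsto_const_nhds.add hsc
      rw [add_zero] at h
      refine h.congr fun n => ?_
      have hcn := (hc n).ne'
      rw [add_div, div_self hcn]
    have hcs_top : Tendsto (fun n => c n + γ n / δ n * t) atTop atTop :=
      tendsto_atTop_mono (fun n => le_add_of_nonneg_right (hspos n).le) hc_top
    have hΔ : Tendsto
        (fun n => 2/3 * ((c n + γ n / δ n * t) ^ ((3:ℝ)/2) - (c n) ^ ((3:ℝ)/2)))
        atTop (nhds (ρ * t)) := by
      have hsqrt_ratio : Tendsto (fun n => Real.sqrt ((c n + γ n / δ n * t) / c n))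
          atTop (nhds 1) := by
        have h := hratio1.sqrt
        rwa [Real.sqrt_one] at h
      have hub : Tendsto (fun n => Real.sqrt (c n + γ n / δ n * t) * (γ n / δ n * t))
          atTop (nhds (ρ * t)) := by
        have h := hst.mul hsqrt_ratio
        rw [mul_one] at h
        refine h.congr fun n => ?_
        have hcn := hc n
        have heq : Real.sqrt (c n) * Real.sqrt ((c n + γ n / δ n * t) / c n)
            = Real.sqrt (c n + γ n / δ n * t) := by
          rw [← Real.sqrt_mul hcn.le]
          congr 1
          field_simp
        calc Real.sqrt (c n) * (γ n / δ n * t) * Real.sqrt ((c n + γ n / δ n * t) / c n)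
            = Real.sqrt (c n) * Real.sqrt ((c n + γ n / δ n * t) / c n) * (γ n / δ n * t) := by
              ring
          _ = Real.sqrt (c n + γ n / δ n * t) * (γ n / δ n * t) := by rw [heq]
      exact tendsto_of_tendsto_of_tendsto_of_le_of_le hst hub
        (fun n => delta_lb (hc n).le (hspos n).le)
        (fun n => delta_ub (hc n).le (hspos n).le)
    have hexpΔ : Tendsto
        (fun n => Real.exp (-(2/3 * ((c n + γ n / δ n * t) ^ ((3:ℝ)/2) - (c n) ^ ((3:ℝ)/2)))))
        atTop (nhds (Real.exp (-(ρ * t)))) :=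
      (Real.continuous_exp.tendsto _).comp hΔ.neg
    have hpow : Tendsto (fun n => ((c n + γ n / δ n * t) / c n) ^ (-(1:ℝ)/4))
        atTop (nhds 1) := by
      have h := hratio1.rpow_const (p := -(1:ℝ)/4) (Or.inl one_ne_zero)
      rwa [Real.one_rpow] at h
    have hQ : Tendsto (fun n => ((c n + γ n / δ n * t) / c n) ^ (-(1:ℝ)/4) *
        Real.exp (-(2/3 * ((c n + γ n / δ n * t) ^ ((3:ℝ)/2) - (c n) ^ ((3:ℝ)/2)))))
        atTop (nhds (Real.exp (-(ρ * t)))) := by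
      have h := hpow.mul hexpΔ
      rwa [one_mul] at h
    have hm2 : Tendsto (fun n => 1 - 3/2 * (c n + γ n / δ n * t) ^ (-(3:ℝ)/2))
        atTop (nhds 1) := by
      have h0 : Tendsto (fun n => (c n + γ n / δ n * t) ^ (-(3:ℝ)/2)) atTop (nhds 0) := by
        refine ((tendsto_rpow_neg_atTop (by norm_num : (0:ℝ) < 3/2)).comp hcs_top).congr
          fun n => ?_
        simp only [Function.comp_apply]
        norm_num
      have h : Tendsto (fun n => 1 - 3/2 * (c n + γ n / δ n * t) ^ (-(3:ℝ)/2)) atTop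
          (nhds (1 - 3/2 * 0)) := tendsto_const_nhds.sub (h0.const_mul (3/2 : ℝ))
      simpa using h
    -- squeeze the Airy ratio
    have hL : Tendsto (fun n => (1 - 3/2 * (c n + γ n / δ n * t) ^ (-(3:ℝ)/2)) *
        (((c n + γ n / δ n * t) / c n) ^ (-(1:ℝ)/4) *
          Real.exp (-(2/3 * ((c n + γ n / δ n * t) ^ ((3:ℝ)/2) - (c n) ^ ((3:ℝ)/2))))))
        atTop (nhds (Real.exp (-(ρ * t)))) := by
      have h := hm2.mul hQ
      rwa [one_mul] at h
    have hU : Tendsto (fun n => (((c n + γ n / δ n * t) / c n) ^ (-(1:ℝ)/4) *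
        Real.exp (-(2/3 * ((c n + γ n / δ n * t) ^ ((3:ℝ)/2) - (c n) ^ ((3:ℝ)/2))))) /
          (1 - 3/2 * (c n) ^ (-(3:ℝ)/2)))
        atTop (nhds (Real.exp (-(ρ * t)))) := by
      have h := hQ.div hm1 one_ne_zero
      rwa [div_one] at h
    have hr : Tendsto (fun n => Ai (c n + γ n / δ n * t) / Ai (c n)) atTop
        (nhds (Real.exp (-(ρ * t)))) := by
      refine tendsto_of_tendsto_of_tendsto_of_le_of_le' hL hU ?_ ?_
      · filter_upwards [hc_top.eventually_ge_atTop 4] with n h4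
        have hcn := hc n
        have hsn := hspos n
        have hcs4 : (4:ℝ) ≤ c n + γ n / δ n * t := by linarith
        have hQn : 0 ≤ ((c n + γ n / δ n * t) / c n) ^ (-(1:ℝ)/4) *
            Real.exp (-(2/3 * ((c n + γ n / δ n * t) ^ ((3:ℝ)/2) - (c n) ^ ((3:ℝ)/2)))) :=
          mul_nonneg (Real.rpow_nonneg (by positivity) _) (Real.exp_pos _).le
        have hm2n : (0:ℝ) ≤ 1 - 3/2 * (c n + γ n / δ n * t) ^ (-(3:ℝ)/2) := by
          have := hfactor _ hcs4; linarith
        have h5 : (1 - 3/2 * (c n + γ n / δ n * t) ^ (-(3:ℝ)/2)) *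
            (Es (c n) * (((c n + γ n / δ n * t) / c n) ^ (-(1:ℝ)/4) *
              Real.exp (-(2/3 * ((c n + γ n / δ n * t) ^ ((3:ℝ)/2) - (c n) ^ ((3:ℝ)/2))))))
            ≤ Ai (c n + γ n / δ n * t) := by
          rw [← Es_ratio hcn hsn.le]
          exact hAilb' _ hcs4
        have hEc : 0 < Es (c n) := Es_pos hcn
        have hstep1 : (1 - 3/2 * (c n + γ n / δ n * t) ^ (-(3:ℝ)/2)) *
            (((c n + γ n / δ n * t) / c n) ^ (-(1:ℝ)/4) *
              Real.exp (-(2/3 * ((c n + γ n / δ n * t) ^ ((3:ℝ)/2) - (c n) ^ ((3:ℝ)/2)))))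
            ≤ Ai (c n + γ n / δ n * t) / Es (c n) := by
          rw [le_div_iff₀ hEc]
          calc _ ≤ (1 - 3/2 * (c n + γ n / δ n * t) ^ (-(3:ℝ)/2)) *
              (Es (c n) * (((c n + γ n / δ n * t) / c n) ^ (-(1:ℝ)/4) *
                Real.exp (-(2/3 * ((c n + γ n / δ n * t) ^ ((3:ℝ)/2) - (c n) ^ ((3:ℝ)/2))))))
              := le_of_eq (by ring)
            _ ≤ Ai (c n + γ n / δ n * t) := h5
        refine hstep1.trans ?_
        gcongr
        · exact (hAipos _ hcs4).le
        · exact hAipos _ h4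
        · exact hAiub' _ h4
      · filter_upwards [hc_top.eventually_ge_atTop 4] with n h4
        have hcn := hc n
        have hsn := hspos n
        have hcs4 : (4:ℝ) ≤ c n + γ n / δ n * t := by linarith
        have hEc : 0 < Es (c n) := Es_pos hcn
        have hm1n : (0:ℝ) < 1 - 3/2 * (c n) ^ (-(3:ℝ)/2) := by
          have := hfactor _ h4; linarith
        have hub1 : Ai (c n + γ n / δ n * t) ≤ Es (c n) *
            (((c n + γ n / δ n * t) / c n) ^ (-(1:ℝ)/4) *
              Real.exp (-(2/3 * ((c n + γ n / δ n * t) ^ ((3:ℝ)/2) - (c n) ^ ((3:ℝ)/2))))) := by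
          rw [← Es_ratio hcn hsn.le]
          exact hAiub' _ hcs4
        have hlb1 : (1 - 3/2 * (c n) ^ (-(3:ℝ)/2)) * Es (c n) ≤ Ai (c n) := hAilb' _ h4
        have hQn : 0 ≤ ((c n + γ n / δ n * t) / c n) ^ (-(1:ℝ)/4) *
            Real.exp (-(2/3 * ((c n + γ n / δ n * t) ^ ((3:ℝ)/2) - (c n) ^ ((3:ℝ)/2)))) :=
          mul_nonneg (Real.rpow_nonneg (by positivity) _) (Real.exp_pos _).le
        calc Ai (c n + γ n / δ n * t) / Ai (c n)
            ≤ (Es (c n) * (((c n + γ n / δ n * t) / c n) ^ (-(1:ℝ)/4) *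
              Real.exp (-(2/3 * ((c n + γ n / δ n * t) ^ ((3:ℝ)/2) - (c n) ^ ((3:ℝ)/2)))))) /
              ((1 - 3/2 * (c n) ^ (-(3:ℝ)/2)) * Es (c n)) :=
              div_le_div₀ (mul_nonneg hEc.le hQn) hub1 (mul_pos hm1n hEc) hlb1
          _ = (((c n + γ n / δ n * t) / c n) ^ (-(1:ℝ)/4) *
              Real.exp (-(2/3 * ((c n + γ n / δ n * t) ^ ((3:ℝ)/2) - (c n) ^ ((3:ℝ)/2))))) /
              (1 - 3/2 * (c n) ^ (-(3:ℝ)/2)) := by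
              rw [mul_comm (1 - 3/2 * (c n) ^ (-(3:ℝ)/2)) (Es (c n)),
                mul_div_mul_left _ _ hEc.ne']
    have hfinal := hr.const_mul (Real.exp (-t) * t ^ α / Real.Gamma (1 + α))
    refine hfinal.congr fun n => ?_
    simp only [hF_def]
    ring
  -- dominated convergence
  have key : Tendsto (fun n => ∫ t in Ioi (0:ℝ), F n t) atTop
      (nhds (∫ t in Ioi (0:ℝ), G t)) := by
    refine tendsto_integral_filter_of_dominated_convergence
      (fun t => 2 / Real.Gamma (1 + α) * (Real.exp (-t) * t ^ ((1 + α) - 1))) ?_ ?_ ?_ ?_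
    · refine Eventually.of_forall fun n => ?_
      refine ContinuousOn.aestronglyMeasurable ?_ measurableSet_Ioi
      have h1 : ContinuousOn (fun t : ℝ => t ^ α) (Ioi 0) := fun t ht =>
        (Real.continuousAt_rpow_const t α (Or.inl (ne_of_gt ht))).continuousWithinAt
      exact continuousOn_const.mul
        ((((Real.continuous_exp.comp continuous_neg).continuousOn.mul h1).div_const _).mul
          ((hAi.comp (continuous_const.add (continuous_const.mul continuous_id))).continuousOn))
    · filter_upwards [hc_top.eventually_ge_atTop 4] with n h4
      rw [ae_restrict_iff' measurableSet_Ioi]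
      refine Eventually.of_forall fun t ht => ?_
      have ht0 : (0:ℝ) < t := ht
      have hcn := hc n
      have hsn : 0 < γ n / δ n * t := by
        have := hγ n; have := hδ n; positivity
      have hcs4 : (4:ℝ) ≤ c n + γ n / δ n * t := by linarith
      have hAic : 0 < Ai (c n) := hAipos _ h4
      have hAics : 0 < Ai (c n + γ n / δ n * t) := hAipos _ hcs4
      have hEsle : Es (c n + γ n / δ n * t) ≤ Es (c n) := by
        rw [Es_ratio hcn hsn.le]
        have hQ1 : ((c n + γ n / δ n * t) / c n) ^ (-(1:ℝ)/4) ≤ 1 :=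
          Real.rpow_le_one_of_one_le_of_nonpos
            (by rw [le_div_iff₀ hcn]; linarith) (by norm_num)
        have hexp1 : Real.exp (-(2/3 * ((c n + γ n / δ n * t) ^ ((3:ℝ)/2) -
            (c n) ^ ((3:ℝ)/2)))) ≤ 1 := by
          rw [Real.exp_le_one_iff]
          have := delta_nonneg hcn.le hsn.le
          linarith
        have hEc : 0 < Es (c n) := Es_pos hcn
        have hX : ((c n + γ n / δ n * t) / c n) ^ (-(1:ℝ)/4) *
            Real.exp (-(2/3 * ((c n + γ n / δ n * t) ^ ((3:ℝ)/2) - (c n) ^ ((3:ℝ)/2)))) ≤ 1 :=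
          mul_le_one₀ hQ1 (Real.exp_pos _).le hexp1
        calc Es (c n) * (((c n + γ n / δ n * t) / c n) ^ (-(1:ℝ)/4) *
            Real.exp (-(2/3 * ((c n + γ n / δ n * t) ^ ((3:ℝ)/2) - (c n) ^ ((3:ℝ)/2)))))
            ≤ Es (c n) * 1 := mul_le_mul_of_nonneg_left hX hEc.le
          _ = Es (c n) := mul_one _
      have hAile : Ai (c n + γ n / δ n * t) ≤ 2 * Ai (c n) := by
        have h1 := hAiub' _ hcs4
        have h2 := hhalf _ h4
        linarith
      have hK : 0 ≤ Real.exp (-t) * t ^ α / Real.Gamma (1 + α) := by positivity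
      have hFpos : 0 ≤ F n t := by
        simp only [hF_def]
        positivity
      rw [Real.norm_eq_abs, abs_of_nonneg hFpos]
      simp only [hF_def]
      calc (1 / Ai (c n)) * (Real.exp (-t) * t ^ α / Real.Gamma (1 + α) *
            Ai (c n + γ n / δ n * t))
          ≤ (1 / Ai (c n)) * (Real.exp (-t) * t ^ α / Real.Gamma (1 + α) * (2 * Ai (c n))) := by
            refine mul_le_mul_of_nonneg_left ?_ (by positivity)
            exact mul_le_mul_of_nonneg_left hAile hK
        _ = 2 / Real.Gamma (1 + α) * (Real.exp (-t) * t ^ ((1 + α) - 1)) := by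
            rw [add_sub_cancel_left]
            field_simp
    · exact (Real.GammaIntegral_convergent (show (0:ℝ) < 1 + α by linarith)).const_mul _
    · rw [ae_restrict_iff' measurableSet_Ioi]
      exact Eventually.of_forall hlim
  -- evaluate the limit integral
  have hGval : ∫ t in Ioi (0:ℝ), G t = (1 + ρ) ^ (-1 - α) := by
    have hcongr : ∫ t in Ioi (0:ℝ), G t = ∫ t in Ioi (0:ℝ),
        (Real.Gamma (1 + α))⁻¹ * (t ^ ((1 + α) - 1) * Real.exp (-((1 + ρ) * t))) := by
      refine setIntegral_congr_fun measurableSet_Ioi fun t ht => ?_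
      simp only [hG_def]
      rw [add_sub_cancel_left]
      rw [show Real.exp (-((1 + ρ) * t)) = Real.exp (-t) * Real.exp (-(ρ * t)) by
        rw [← Real.exp_add]; congr 1; ring]
      ring
    rw [hcongr, MeasureTheory.integral_const_mul,
      Real.integral_rpow_mul_exp_neg_mul_Ioi (by linarith : (0:ℝ) < 1 + α) h1ρ]
    rw [one_div, Real.inv_rpow h1ρ.le, ← Real.rpow_neg h1ρ.le,
      show -(1 + α) = -1 - α by ring]
    field_simp
  rw [hGval] at key
  exact key.congr fun n => (stepA n).symm
end

section
/- Let β > 1, μ > 0, and let u: [0,1] → ℝ be a C² function on (0,1), continuous on [0,1], satisfying x(1−x)u''(x) + (α(1−x) − βx)u'(x) − (λτ + μx)u(x) = 0 on (0,1) for some α, λ, τ ≥ 0, with u(1) = 1 and u'(1) = −(λτ+μ)/β, where λτ + μ > 0. Then u is strictly decreasing on [0,1]. -/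
open Set Filter Topology

/-- Continuation lemma: if `u' ≥ 0` at a point `x₁ ∈ (0,1)` with `u x₁ > 0`, and at every
point of `(0,1)` where `u' = 0` and `u > 0` we have `u'' > 0`, then `u' ≥ 0` on `[x₁, 1)`. -/
private lemma lemA_stmt6 (u : ℝ → ℝ)
    (hdiff : ∀ x ∈ Ioo (0:ℝ) 1, HasDerivAt u (deriv u x) x)
    (hdiff2 : ∀ x ∈ Ioo (0:ℝ) 1, HasDerivAt (deriv u) (deriv (deriv u) x) x)
    (hode2 : ∀ x ∈ Ioo (0:ℝ) 1, deriv u x = 0 → 0 < u x → 0 < deriv (deriv u) x)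
    (x₁ : ℝ) (hx₁ : x₁ ∈ Ioo (0:ℝ) 1) (hux : 0 < u x₁) (hd : 0 ≤ deriv u x₁) :
    ∀ t ∈ Ico x₁ 1, 0 ≤ deriv u t := by
  by_contra hcon
  push_neg at hcon
  obtain ⟨z, hz, hz'⟩ := hcon
  set Z : Set ℝ := {t | t ∈ Ico x₁ 1 ∧ deriv u t < 0} with hZ
  have hzZ : z ∈ Z := ⟨hz, hz'⟩
  have hZne : Z.Nonempty := ⟨z, hzZ⟩
  have hZbdd : BddBelow Z := ⟨x₁, fun t ht => ht.1.1⟩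
  set t₀ := sInf Z with ht₀
  have ht₀x₁ : x₁ ≤ t₀ := le_csInf hZne fun t ht => ht.1.1
  have ht₀lt : t₀ < 1 := lt_of_le_of_lt (csInf_le hZbdd hzZ) hz.2
  have ht₀mem : t₀ ∈ Ioo (0:ℝ) 1 := ⟨lt_of_lt_of_le hx₁.1 ht₀x₁, ht₀lt⟩
  have hcAt : ContinuousAt (deriv u) t₀ := (hdiff2 t₀ ht₀mem).continuousAt
  -- deriv u t₀ ≤ 0
  have hle : deriv u t₀ ≤ 0 := by
    by_contra h
    push_neg at h
    have hev := hcAt (Ioi_mem_nhds h)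
    rw [Filter.mem_map, Metric.mem_nhds_iff] at hev
    obtain ⟨ε, hε, hball⟩ := hev
    obtain ⟨z', hz'Z, hz'lt⟩ := Real.lt_sInf_add_pos hZne hε
    have hz'ge : t₀ ≤ z' := csInf_le hZbdd hz'Z
    have : z' ∈ Metric.ball t₀ ε := by
      rw [Metric.mem_ball, Real.dist_eq, abs_lt]
      constructor <;> linarith
    exact absurd (hball this) (not_lt.mpr (le_of_lt hz'Z.2))
  -- deriv u t₀ ≥ 0
  have hge : 0 ≤ deriv u t₀ := by
    rcases eq_or_lt_of_le ht₀x₁ with he | hlt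
    · rw [← he]; exact hd
    · by_contra h
      push_neg at h
      have hev := hcAt (Iio_mem_nhds h)
      rw [Filter.mem_map, Metric.mem_nhds_iff] at hev
      obtain ⟨ε, hε, hball⟩ := hev
      set s := max x₁ (t₀ - ε/2) with hs
      have hs1 : x₁ ≤ s := le_max_left _ _
      have hs2 : s < t₀ := max_lt hlt (by linarith)
      have hs3 : t₀ - ε/2 ≤ s := le_max_right _ _
      have hsball : s ∈ Metric.ball t₀ ε := by
        rw [Metric.mem_ball, Real.dist_eq, abs_lt]
        constructor <;> linarith
      have : s ∈ Z := ⟨⟨hs1, lt_trans hs2 ht₀lt⟩, hball hsball⟩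
      exact absurd (csInf_le hZbdd this) (not_le.mpr hs2)
  have ht0 : deriv u t₀ = 0 := le_antisymm hle hge
  -- u t₀ ≥ u x₁ > 0
  have hmono : u x₁ ≤ u t₀ := by
    rcases eq_or_lt_of_le ht₀x₁ with he | hlt
    · rw [he]
    · have hmo : MonotoneOn u (Icc x₁ t₀) := by
        apply monotoneOn_of_deriv_nonneg (convex_Icc _ _)
        · intro x hx
          exact ((hdiff x ⟨lt_of_lt_of_le hx₁.1 hx.1, lt_of_le_of_lt hx.2 ht₀lt⟩).continuousAt).continuousWithinAt
        · rw [interior_Icc]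
          intro x hx
          exact ((hdiff x ⟨lt_trans hx₁.1 hx.1, lt_trans hx.2 ht₀lt⟩).differentiableAt).differentiableWithinAt
        · rw [interior_Icc]
          intro x hx
          by_contra hneg
          push_neg at hneg
          have : x ∈ Z := ⟨⟨le_of_lt hx.1, lt_trans hx.2 ht₀lt⟩, hneg⟩
          exact absurd (csInf_le hZbdd this) (not_le.mpr hx.2)
      exact hmo (left_mem_Icc.mpr ht₀x₁) (right_mem_Icc.mpr ht₀x₁) ht₀x₁
  have hut₀ : 0 < u t₀ := lt_of_lt_of_le hux hmono
  have hD : 0 < deriv (deriv u) t₀ := hode2 t₀ ht₀mem ht0 hut₀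
  have hslope : Tendsto (slope (deriv u) t₀) (𝓝[≠] t₀) (𝓝 (deriv (deriv u) t₀)) :=
    hasDerivAt_iff_tendsto_slope.mp (hdiff2 t₀ ht₀mem)
  have hmem : (slope (deriv u) t₀) ⁻¹' (Ioi 0) ∈ 𝓝[≠] t₀ := hslope (Ioi_mem_nhds hD)
  rw [Metric.mem_nhdsWithin_iff] at hmem
  obtain ⟨ε, hε, hball⟩ := hmem
  obtain ⟨z', hz'Z, hz'lt⟩ := Real.lt_sInf_add_pos hZne hε
  have hz'ge : t₀ ≤ z' := csInf_le hZbdd hz'Z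
  have hz'ne : z' ≠ t₀ := by
    intro h
    have h2 : deriv u z' < 0 := hz'Z.2
    rw [h, ht0] at h2
    exact lt_irrefl 0 h2
  have hz'gt : t₀ < z' := lt_of_le_of_ne hz'ge (Ne.symm hz'ne)
  have hz'b : z' ∈ Metric.ball t₀ ε ∩ {t₀}ᶜ := by
    constructor
    · rw [Metric.mem_ball, Real.dist_eq, abs_lt]
      constructor <;> linarith
    · exact hz'ne
  have hsl : 0 < slope (deriv u) t₀ z' := hball hz'b
  rw [slope_def_field, ht0, sub_zero] at hsl
  have : 0 < deriv u z' := by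
    have h1 : 0 < z' - t₀ := by linarith
    have := mul_pos hsl h1
    rwa [div_mul_cancel₀ _ (ne_of_gt h1)] at this
  exact absurd this (not_lt.mpr (le_of_lt hz'Z.2))

theorem stmt6 (β μ α lam τ : ℝ) (hβ : 1 < β) (hμ : 0 < μ)
    (hα : 0 ≤ α) (hlam : 0 ≤ lam) (hτ : 0 ≤ τ) (hpos : 0 < lam * τ + μ)
    (u : ℝ → ℝ)
    (hsmooth : ContDiffOn ℝ 2 u (Ioo 0 1))
    (hcont : ContinuousOn u (Icc 0 1))
    (hode : ∀ x ∈ Ioo (0:ℝ) 1,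
      x * (1 - x) * iteratedDeriv 2 u x + (α * (1 - x) - β * x) * deriv u x
        - (lam * τ + μ * x) * u x = 0)
    (hu1 : u 1 = 1)
    (hu'1 : deriv u 1 = -(lam * τ + μ) / β) :
    StrictAntiOn u (Icc 0 1) := by
  have hopen : IsOpen (Ioo (0:ℝ) 1) := isOpen_Ioo
  have hudiff : DifferentiableOn ℝ u (Ioo 0 1) := hsmooth.differentiableOn (by norm_num)
  have hdiff : ∀ x ∈ Ioo (0:ℝ) 1, HasDerivAt u (deriv u x) x := fun x hx =>
    ((hudiff x hx).differentiableAt (hopen.mem_nhds hx)).hasDerivAt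
  have hd1 : ContDiffOn ℝ 1 (deriv u) (Ioo 0 1) :=
    hsmooth.deriv_of_isOpen hopen (by norm_num)
  have hdiff2 : ∀ x ∈ Ioo (0:ℝ) 1, HasDerivAt (deriv u) (deriv (deriv u) x) x := fun x hx =>
    (((hd1.differentiableOn one_ne_zero) x hx).differentiableAt (hopen.mem_nhds hx)).hasDerivAt
  have hode2 : ∀ x ∈ Ioo (0:ℝ) 1, deriv u x = 0 → 0 < u x → 0 < deriv (deriv u) x := by
    intro x hx h0 hux
    have heq := hode x hx
    rw [show (2:ℕ) = 1 + 1 from rfl, iteratedDeriv_succ, iteratedDeriv_one, h0, mul_zero,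
      add_zero] at heq
    have hc : 0 < lam * τ + μ * x := by nlinarith [mul_nonneg hlam hτ, mul_pos hμ hx.1]
    have hA : 0 < x * (1 - x) := mul_pos hx.1 (by linarith [hx.2])
    have hB : 0 < (lam * τ + μ * x) * u x := mul_pos hc hux
    by_contra h
    push_neg at h
    nlinarith [mul_nonneg hA.le (neg_nonneg.mpr h)]
  have hd1neg : deriv u 1 < 0 := by
    rw [hu'1]
    apply div_neg_of_neg_of_pos <;> linarith
  have hdAt1 : HasDerivAt u (deriv u 1) 1 := by
    by_cases h : DifferentiableAt ℝ u 1
    · exact h.hasDerivAt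
    · exfalso
      rw [deriv_zero_of_not_differentiableAt h] at hd1neg
      exact lt_irrefl 0 hd1neg
  -- u > 1 just to the left of 1
  have hnear : ∃ a, a < 1 ∧ ∀ x ∈ Ioo a 1, 1 < u x := by
    have hslope : Tendsto (slope u 1) (𝓝[≠] 1) (𝓝 (deriv u 1)) :=
      hasDerivAt_iff_tendsto_slope.mp hdAt1
    have hmem : (slope u 1) ⁻¹' (Iio 0) ∈ 𝓝[≠] (1:ℝ) := hslope (Iio_mem_nhds hd1neg)
    have hmem' : (slope u 1) ⁻¹' (Iio 0) ∈ 𝓝[<] (1:ℝ) :=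
      nhdsWithin_mono 1 (fun y hy => ne_of_lt hy) hmem
    rw [mem_nhdsLT_iff_exists_Ioo_subset] at hmem'
    obtain ⟨a, ha, hsub⟩ := hmem'
    refine ⟨a, ha, fun x hx => ?_⟩
    have hsl : slope u 1 x < 0 := hsub hx
    rw [slope_def_field, hu1] at hsl
    have hx1 : x - 1 < 0 := by linarith [hx.2]
    have h2 : 0 < (u x - 1) / (x - 1) * (x - 1) := mul_pos_of_neg_of_neg hsl hx1
    rw [div_mul_cancel₀ _ (ne_of_lt hx1)] at h2
    linarith
  obtain ⟨a, ha1, hagt⟩ := hnear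
  set a0 : ℝ := max a 0 with ha0
  have ha0lt : a0 < 1 := max_lt ha1 one_pos
  have ha0nn : 0 ≤ a0 := le_max_right _ _
  -- limit helper: if u' ≥ 0 on [x₁,1) then u x₁ ≤ u 1
  have hlim : ∀ x₁ ∈ Ioo (0:ℝ) 1, (∀ t ∈ Ico x₁ 1, 0 ≤ deriv u t) → u x₁ ≤ u 1 := by
    intro x₁ hx₁ hmon
    have hmono2 : ∀ c ∈ Ico x₁ 1, u x₁ ≤ u c := by
      intro c hc
      rcases eq_or_lt_of_le hc.1 with he | hlt
      · rw [← he]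
      · have hmo : MonotoneOn u (Icc x₁ c) := by
          apply monotoneOn_of_deriv_nonneg (convex_Icc _ _)
          · intro x hx
            exact ((hdiff x ⟨lt_of_lt_of_le hx₁.1 hx.1,
              lt_of_le_of_lt hx.2 hc.2⟩).continuousAt).continuousWithinAt
          · rw [interior_Icc]
            intro x hx
            exact ((hdiff x ⟨lt_trans hx₁.1 hx.1,
              lt_trans hx.2 hc.2⟩).differentiableAt).differentiableWithinAt
          · rw [interior_Icc]
            intro x hx
            exact hmon x ⟨le_of_lt hx.1, lt_trans hx.2 hc.2⟩
        exact hmo ⟨le_rfl, hc.1⟩ ⟨hc.1, le_rfl⟩ hc.1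
    have hsub : Ico x₁ 1 ⊆ Icc 0 1 := fun t ht =>
      ⟨le_of_lt (lt_of_lt_of_le hx₁.1 ht.1), le_of_lt ht.2⟩
    have hten : Tendsto u (𝓝[Ico x₁ 1] 1) (𝓝 (u 1)) :=
      (hcont 1 (right_mem_Icc.mpr zero_le_one)).mono hsub
    have hne : (𝓝[Ico x₁ 1] (1:ℝ)).NeBot := by
      rw [nhdsWithin_Ico_eq_nhdsLT hx₁.2]
      infer_instance
    exact ge_of_tendsto hten (eventually_nhdsWithin_of_forall hmono2)
  -- limit helper: if u' ≤ 0 on [t,1) then u 1 ≤ u t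
  have hlim2 : ∀ t ∈ Ioo (0:ℝ) 1, (∀ s ∈ Ico t 1, deriv u s ≤ 0) → u 1 ≤ u t := by
    intro t ht hmon
    have hmono2 : ∀ c ∈ Ico t 1, u c ≤ u t := by
      intro c hc
      rcases eq_or_lt_of_le hc.1 with he | hlt
      · rw [← he]
      · have hmo : AntitoneOn u (Icc t c) := by
          apply antitoneOn_of_deriv_nonpos (convex_Icc _ _)
          · intro x hx
            exact ((hdiff x ⟨lt_of_lt_of_le ht.1 hx.1,
              lt_of_le_of_lt hx.2 hc.2⟩).continuousAt).continuousWithinAt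
          · rw [interior_Icc]
            intro x hx
            exact ((hdiff x ⟨lt_trans ht.1 hx.1,
              lt_trans hx.2 hc.2⟩).differentiableAt).differentiableWithinAt
          · rw [interior_Icc]
            intro x hx
            exact hmon x ⟨le_of_lt hx.1, lt_trans hx.2 hc.2⟩
        exact hmo ⟨le_rfl, hc.1⟩ ⟨hc.1, le_rfl⟩ hc.1
    have hsub : Ico t 1 ⊆ Icc 0 1 := fun s hs =>
      ⟨le_of_lt (lt_of_lt_of_le ht.1 hs.1), le_of_lt hs.2⟩
    have hten : Tendsto u (𝓝[Ico t 1] 1) (𝓝 (u 1)) :=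
      (hcont 1 (right_mem_Icc.mpr zero_le_one)).mono hsub
    have hne : (𝓝[Ico t 1] (1:ℝ)).NeBot := by
      rw [nhdsWithin_Ico_eq_nhdsLT ht.2]
      infer_instance
    exact le_of_tendsto hten (eventually_nhdsWithin_of_forall hmono2)
  -- step 1 : u' < 0 on (a0, 1)
  have hstep1 : ∀ x ∈ Ioo a0 1, deriv u x < 0 := by
    intro x hx
    by_contra h
    push_neg at h
    have hxm : x ∈ Ioo (0:ℝ) 1 := ⟨lt_of_le_of_lt ha0nn hx.1, hx.2⟩
    have hu_x : 1 < u x := hagt x ⟨lt_of_le_of_lt (le_max_left a 0) hx.1, hx.2⟩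
    have hall := lemA_stmt6 u hdiff hdiff2 hode2 x hxm (by linarith) h
    have := hlim x hxm hall
    rw [hu1] at this
    linarith
  -- step 2 : u' < 0 on all of (0,1)
  have hneg : ∀ x ∈ Ioo (0:ℝ) 1, deriv u x < 0 := by
    by_contra h
    push_neg at h
    obtain ⟨w, hw, hw'⟩ := h
    set T : Set ℝ := {x | x ∈ Ioo (0:ℝ) 1 ∧ 0 ≤ deriv u x} with hT
    have hTne : T.Nonempty := ⟨w, hw, hw'⟩
    have hTbd : ∀ t ∈ T, t ≤ a0 := by
      intro t ht
      by_contra hta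
      push_neg at hta
      exact absurd (hstep1 t ⟨hta, ht.1.2⟩) (not_lt.mpr ht.2)
    have hTbdd : BddAbove T := ⟨a0, hTbd⟩
    set x₀ := sSup T with hx₀
    have hx₀le : x₀ ≤ a0 := csSup_le hTne hTbd
    have hx₀pos : 0 < x₀ := lt_of_lt_of_le hw.1 (le_csSup hTbdd ⟨hw, hw'⟩)
    have hx₀mem : x₀ ∈ Ioo (0:ℝ) 1 := ⟨hx₀pos, lt_of_le_of_lt hx₀le ha0lt⟩
    have hcAt : ContinuousAt (deriv u) x₀ := (hdiff2 x₀ hx₀mem).continuousAt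
    have hge : 0 ≤ deriv u x₀ := by
      by_contra hneg'
      push_neg at hneg'
      have hev := hcAt (Iio_mem_nhds hneg')
      rw [Filter.mem_map, Metric.mem_nhds_iff] at hev
      obtain ⟨ε, hε, hball⟩ := hev
      obtain ⟨t, htT, htlt⟩ := exists_lt_of_lt_csSup hTne (by linarith : x₀ - ε < x₀)
      have htle : t ≤ x₀ := le_csSup hTbdd htT
      have : t ∈ Metric.ball x₀ ε := by
        rw [Metric.mem_ball, Real.dist_eq, abs_lt]
        constructor <;> linarith
      exact absurd (hball this) (not_lt.mpr htT.2)
    have hright : ∀ t ∈ Ioo x₀ 1, deriv u t < 0 := by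
      intro t ht
      by_contra h'
      push_neg at h'
      have : t ∈ T := ⟨⟨lt_trans hx₀pos ht.1, ht.2⟩, h'⟩
      exact absurd (le_csSup hTbdd this) (not_le.mpr ht.1)
    have hub : ∀ t ∈ Ioo x₀ 1, 1 ≤ u t := by
      intro t ht
      have htm : t ∈ Ioo (0:ℝ) 1 := ⟨lt_trans hx₀pos ht.1, ht.2⟩
      have := hlim2 t htm (fun s hs =>
        le_of_lt (hright s ⟨lt_of_lt_of_le ht.1 hs.1, hs.2⟩))
      rwa [hu1] at this
    have hux₀ : 1 ≤ u x₀ := by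
      have hten : Tendsto u (𝓝[>] x₀) (𝓝 (u x₀)) :=
        ((hdiff x₀ hx₀mem).continuousAt).continuousWithinAt
      refine ge_of_tendsto hten ?_
      filter_upwards [Ioo_mem_nhdsGT_of_mem ⟨le_rfl, hx₀mem.2⟩] with t ht using hub t ht
    have hall := lemA_stmt6 u hdiff hdiff2 hode2 x₀ hx₀mem (by linarith) hge
    have hmid : (x₀ + 1) / 2 ∈ Ioo x₀ 1 := ⟨by linarith [hx₀mem.2], by linarith [hx₀mem.2]⟩
    exact absurd (hall _ ⟨le_of_lt hmid.1, hmid.2⟩) (not_le.mpr (hright _ hmid))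
  exact strictAntiOn_of_deriv_neg (convex_Icc (0:ℝ) 1) hcont
    (fun x hx => hneg x (by rwa [interior_Icc] at hx))
end

section
/- Fix β > 1, μ > 0, λ > 0, and sequences τ_n → 0, α_n → 0 with τ_n < 1 and sup_n λτ_n < ∞. Define a_n(0)=1, a_n(1)=(λτ_n+μ)/β, and a_n(k) = c_n(k−1)a_n(k−1) − d_n(k)a_n(k−2) for k ≥ 2, where c_n(k−1) = (λτ_n + μ + (k−1)(k+α_n+β−2))/(k(β+k−1)) and d_n(k) = μ/(k(β+k−1)). Then for each ε > 0 there exist C_ε > 0 and N_ε ∈ ℕ such that |a_n(k)| ≤ C_ε · k^{−(2−ε)} for all k ≥ 1 and all n ≥ N_ε. -/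
open Filter

set_option maxHeartbeats 1000000 in
lemma bern_aux {t ε : ℝ} (ht1 : t ≤ 1) (hε0 : 0 ≤ ε) (hε1 : ε ≤ 1) :
    (1 - t) ^ ε ≤ 1 - ε * t := by
  have := rpow_one_add_le_one_add_mul_self (s := -t) (by linarith) hε0 hε1
  simpa [sub_eq_add_neg, mul_neg] using this

set_option maxHeartbeats 1000000 in
lemma step_ineq (β μ ε s al x S : ℝ) (hβ : 1 < β) (hμ : 0 < μ)
    (hε0 : 0 < ε) (hε1 : ε ≤ 1) (hs0 : 0 < s) (hsS : s ≤ S)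
    (hal0 : 0 < al) (hal : al ≤ ε/4) (hx : 6 ≤ x)
    (hxK : β + 8*(S+μ) ≤ 3*ε/4*x) :
    (s + (x-1)*(x+al+β-2))/(x*(β+x-1)) * (x-1) ^ (-(2-ε)) +
      μ/(x*(β+x-1)) * (x-2) ^ (-(2-ε)) ≤ x ^ (-(2-ε)) := by
  have hx0 : (0:ℝ) < x := by linarith
  have hy0 : (0:ℝ) < x - 1 := by linarith
  have hz0 : (0:ℝ) < x - 2 := by linarith
  have hS0 : 0 < S := lt_of_lt_of_le hs0 hsS
  have hxε : 0 < x - ε := by linarith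
  -- key polynomial inequality
  have h1 : (x+al+β-2)*(x-ε) ≤ (x+β-1)*(x-1) - ((3*ε/4)*x - β) := by
    have e1 : al * x ≤ ε/4 * x := mul_le_mul_of_nonneg_right hal (by linarith)
    have e2 : 0 ≤ ε * al := by positivity
    have e3 : 0 ≤ ε * (β - 1) := by nlinarith
    nlinarith [e1, e2, e3]
  have h4 : (S+μ)*x^3 ≤ ((3*ε/4)*x - β)*(x-1)*(x-2)^2 := by
    have hf : 8*(S+μ) ≤ (3*ε/4)*x - β := by linarith
    calc (S+μ)*x^3 ≤ 3/2*(S+μ)*x^3 := by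
          nlinarith [mul_pos (show (0:ℝ) < S + μ by linarith) (pow_pos hx0 3)]
      _ = 8*(S+μ) * (3/4*x) * (x/2)^2 := by ring
      _ ≤ ((3*ε/4)*x - β)*(x-1)*(x-2)^2 := by
          apply mul_le_mul (mul_le_mul hf (by linarith) (by linarith) (by linarith))
            (pow_le_pow_left₀ (by linarith) (by linarith) 2) (by positivity)
            (mul_nonneg (by linarith) (by linarith))
  have hpoly : (s + (x-1)*(x+al+β-2))*(x-ε)*(x-2)^2 + μ*x*(x-1)^2
      ≤ (β+x-1)*(x-1)^2*(x-2)^2 := by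
    have T1 : s*(x-ε)*(x-2)^2 ≤ S*x^3 := by
      calc s*(x-ε)*(x-2)^2 ≤ (S*x)*x^2 := by
            apply mul_le_mul (mul_le_mul hsS (by linarith) (by linarith) (by linarith))
              (pow_le_pow_left₀ (by linarith) (by linarith) 2) (by positivity)
              (by positivity)
        _ = S*x^3 := by ring
    have T2 : μ*x*(x-1)^2 ≤ μ*x^3 := by
      have h : (x-1)^2 ≤ x^2 := pow_le_pow_left₀ (by linarith) (by linarith) 2
      calc μ*x*(x-1)^2 ≤ μ*x*x^2 := by
            exact mul_le_mul_of_nonneg_left h (by positivity)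
        _ = μ*x^3 := by ring
    have T3 : (x+al+β-2)*(x-ε)*((x-1)*(x-2)^2)
        ≤ ((x+β-1)*(x-1) - ((3*ε/4)*x - β))*((x-1)*(x-2)^2) :=
      mul_le_mul_of_nonneg_right h1 (by positivity)
    nlinarith [T1, T2, T3, h4]
  -- positivity of coefficients
  have hD : (0:ℝ) < x*(β+x-1) := mul_pos hx0 (by linarith)
  have hc0 : 0 ≤ (s + (x-1)*(x+al+β-2))/(x*(β+x-1)) := by
    apply div_nonneg _ hD.le; nlinarith
  have hd0 : 0 ≤ μ/(x*(β+x-1)) := div_nonneg hμ.le hD.le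
  -- rpow bounds
  have hr1 : (x/(x-1)) ^ (2-ε) ≤ x*(x-ε)/(x-1)^2 := by
    have hq0 : (0:ℝ) < x/(x-1) := by positivity
    have e : (x/(x-1)) ^ (2-ε) = (x/(x-1))^(2:ℕ) * ((x-1)/x) ^ ε := by
      rw [Real.rpow_sub hq0, ← Real.rpow_two, div_eq_mul_inv ((x/(x-1))^(2:ℝ)),
        ← Real.inv_rpow hq0.le, inv_div]
    rw [e]
    have hb : ((x-1)/x) ^ ε ≤ 1 - ε * (1/x) := by
      have : (x-1)/x = 1 - 1/x := by field_simp
      rw [this]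
      exact bern_aux (by rw [div_le_one hx0]; linarith) hε0.le hε1
    calc (x/(x-1))^(2:ℕ) * ((x-1)/x) ^ ε ≤ (x/(x-1))^(2:ℕ) * (1 - ε*(1/x)) :=
          mul_le_mul_of_nonneg_left hb (by positivity)
      _ = x*(x-ε)/(x-1)^2 := by field_simp
  have hr2 : (x/(x-2)) ^ (2-ε) ≤ x^2/(x-2)^2 := by
    have h1le : (1:ℝ) ≤ x/(x-2) := by rw [le_div_iff₀ hz0]; linarith
    calc (x/(x-2)) ^ (2-ε) ≤ (x/(x-2)) ^ (2:ℝ) :=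
          Real.rpow_le_rpow_of_exponent_le h1le (by linarith)
      _ = x^2/(x-2)^2 := by
          rw [Real.rpow_two, div_pow]
  -- combine
  have comb : ∀ w : ℝ, 0 < w → w^(-(2-ε)) = x^(-(2-ε)) * (x/w)^(2-ε) := by
    intro w hw
    rw [Real.div_rpow hx0.le hw.le, Real.rpow_neg hx0.le, Real.rpow_neg hw.le]
    have n1 := (Real.rpow_pos_of_pos hx0 (2-ε)).ne'
    have n2 := (Real.rpow_pos_of_pos hw (2-ε)).ne'
    field_simp
  have key : (s + (x-1)*(x+al+β-2))/(x*(β+x-1)) * (x*(x-ε)/(x-1)^2) +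
      μ/(x*(β+x-1)) * (x^2/(x-2)^2) ≤ 1 := by
    have heq : (s + (x-1)*(x+al+β-2))/(x*(β+x-1)) * (x*(x-ε)/(x-1)^2) +
        μ/(x*(β+x-1)) * (x^2/(x-2)^2)
        = ((s + (x-1)*(x+al+β-2))*(x-ε)*(x-2)^2*x + μ*x^2*(x-1)^2)
          / (x*(β+x-1)*(x-1)^2*(x-2)^2) := by
      field_simp
    rw [heq, div_le_one (by positivity)]
    nlinarith [mul_le_mul_of_nonneg_left hpoly hx0.le]
  calc (s + (x-1)*(x+al+β-2))/(x*(β+x-1)) * (x-1) ^ (-(2-ε)) +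
      μ/(x*(β+x-1)) * (x-2) ^ (-(2-ε))
      = x^(-(2-ε)) * ((s + (x-1)*(x+al+β-2))/(x*(β+x-1)) * (x/(x-1))^(2-ε) +
          μ/(x*(β+x-1)) * (x/(x-2))^(2-ε)) := by
        rw [comb _ hy0, comb _ hz0]; ring
    _ ≤ x^(-(2-ε)) * 1 := by
        apply mul_le_mul_of_nonneg_left _ (Real.rpow_nonneg hx0.le _)
        calc _ ≤ (s + (x-1)*(x+al+β-2))/(x*(β+x-1)) * (x*(x-ε)/(x-1)^2) +
            μ/(x*(β+x-1)) * (x^2/(x-2)^2) :=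
            add_le_add (mul_le_mul_of_nonneg_left hr1 hc0)
              (mul_le_mul_of_nonneg_left hr2 hd0)
          _ ≤ 1 := key
    _ = x^(-(2-ε)) := mul_one _

set_option maxHeartbeats 1000000 in
lemma main_aux (β μ lam : ℝ) (hβ : 1 < β) (hμ : 0 < μ) (hlam : 0 < lam)
    (τ α : ℕ → ℝ) (hτpos : ∀ n, 0 < τ n) (hαpos : ∀ n, 0 < α n)
    (hα0 : Tendsto α atTop (nhds 0))
    (hτ1 : ∀ n, τ n < 1)
    (a : ℕ → ℕ → ℝ)
    (ha0 : ∀ n, a n 0 = 1)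
    (ha1 : ∀ n, a n 1 = (lam * τ n + μ) / β)
    (harec : ∀ n, ∀ k : ℕ, 2 ≤ k →
      a n k = (lam * τ n + μ + ((k:ℝ) - 1) * ((k:ℝ) + α n + β - 2)) / ((k:ℝ) * (β + (k:ℝ) - 1))
                * a n (k - 1)
              - μ / ((k:ℝ) * (β + (k:ℝ) - 1)) * a n (k - 2))
    (ε : ℝ) (hε0 : 0 < ε) (hε1 : ε ≤ 1) :
    ∃ C > (0:ℝ), ∃ N : ℕ, ∀ n ≥ N, ∀ k : ℕ, 1 ≤ k → |a n k| ≤ C * (k:ℝ) ^ (-(2 - ε)) := by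
  set S : ℝ := lam + μ with hS
  have hS0 : 0 < S := by positivity
  obtain ⟨N, hN⟩ : ∃ N, ∀ n ≥ N, α n ≤ ε/4 := by
    have h := hα0.eventually (eventually_le_nhds (show (0:ℝ) < ε/4 by positivity))
    exact eventually_atTop.1 h
  have hsb : ∀ n, 0 < lam * τ n + μ ∧ lam * τ n + μ ≤ S := by
    intro n
    constructor
    · have := hτpos n; positivity
    · have h1 := hτ1 n; have h2 := (hτpos n).le
      rw [hS]; nlinarith
  set Kb : ℕ := max 6 (⌈(4/(3*ε))*(β + 8*(S+μ))⌉₊ + 1) with hKb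
  have hKb6 : 6 ≤ Kb := le_max_left _ _
  have hKbR : ∀ k : ℕ, Kb ≤ k → β + 8*(S+μ) ≤ 3*ε/4*(k:ℝ) := by
    intro k hk
    have h1 : (4/(3*ε))*(β + 8*(S+μ)) ≤ (k:ℝ) := by
      calc (4/(3*ε))*(β + 8*(S+μ)) ≤ (⌈(4/(3*ε))*(β + 8*(S+μ))⌉₊ : ℝ) := Nat.le_ceil _
        _ ≤ (Kb:ℝ) := by
            have : ⌈(4/(3*ε))*(β + 8*(S+μ))⌉₊ ≤ Kb := by
              rw [hKb]; omega
            exact_mod_cast this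
        _ ≤ (k:ℝ) := by exact_mod_cast hk
    have he : β + 8*(S+μ) = 3*ε/4*((4/(3*ε))*(β + 8*(S+μ))) := by
      field_simp
    rw [he]
    exact mul_le_mul_of_nonneg_left h1 (by positivity)
  set B : ℝ := 1 + S + μ + ((Kb:ℝ)+2)*((Kb:ℝ)+β+2) with hB
  have hKbpos : (0:ℝ) ≤ (Kb:ℝ) := Nat.cast_nonneg _
  have hB1 : 1 ≤ B := by rw [hB]; nlinarith
  have hB0 : 0 < B := by linarith
  -- coefficient bounds for 2 ≤ k
  have hcoef : ∀ n ≥ N, ∀ k : ℕ, 2 ≤ k →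
      0 ≤ (lam * τ n + μ + ((k:ℝ) - 1) * ((k:ℝ) + α n + β - 2)) / ((k:ℝ) * (β + (k:ℝ) - 1))
      ∧ 0 ≤ μ / ((k:ℝ) * (β + (k:ℝ) - 1))
      ∧ |a n k| ≤ (lam * τ n + μ + ((k:ℝ) - 1) * ((k:ℝ) + α n + β - 2)) / ((k:ℝ) * (β + (k:ℝ) - 1)) * |a n (k-1)|
          + μ / ((k:ℝ) * (β + (k:ℝ) - 1)) * |a n (k-2)| := by
    intro n hn k hk
    have hk2 : (2:ℝ) ≤ (k:ℝ) := by exact_mod_cast hk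
    have hs := (hsb n).1
    have hα := hαpos n
    have hD : (0:ℝ) < (k:ℝ) * (β + (k:ℝ) - 1) := by nlinarith
    have hnum : (0:ℝ) ≤ lam * τ n + μ + ((k:ℝ) - 1) * ((k:ℝ) + α n + β - 2) := by nlinarith
    refine ⟨div_nonneg hnum hD.le, div_nonneg hμ.le hD.le, ?_⟩
    rw [harec n k hk]
    calc |_ * a n (k-1) - _ * a n (k-2)| ≤ |_ * a n (k-1)| + |_ * a n (k-2)| := abs_sub _ _
      _ = _ := by
          rw [abs_mul, abs_mul, abs_of_nonneg (div_nonneg hnum hD.le),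
            abs_of_nonneg (div_nonneg hμ.le hD.le)]
  -- base bound
  have hbase : ∀ n ≥ N, ∀ k : ℕ, k ≤ Kb → |a n k| ≤ B ^ k := by
    intro n hn k
    induction k using Nat.strong_induction_on with
    | _ k IH =>
      intro hkK
      match k, hkK with
      | 0, _ => simp [ha0 n]
      | 1, _ =>
          rw [ha1 n, pow_one]
          have hs := (hsb n).1
          have hsS := (hsb n).2
          rw [abs_of_nonneg (by positivity)]
          calc (lam * τ n + μ)/β ≤ (lam * τ n + μ)/1 := by
                apply div_le_div_of_nonneg_left hs.le one_pos hβ.le |>.trans_eq rfl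
            _ = lam * τ n + μ := div_one _
            _ ≤ S := hsS
            _ ≤ B := by rw [hB]; nlinarith
      | (m+2), hkK =>
          set k := m + 2 with hkdef
          have hk2 : 2 ≤ k := by omega
          obtain ⟨hc0, hd0, habs⟩ := hcoef n hn k hk2
          have hk2' : (2:ℝ) ≤ (k:ℝ) := by exact_mod_cast hk2
          have hkKb : (k:ℝ) ≤ (Kb:ℝ) := by exact_mod_cast hkK
          have hD1 : (1:ℝ) ≤ (k:ℝ) * (β + (k:ℝ) - 1) := by nlinarith
          have hα4 := hN n hn
          have hα := hαpos n
          have hs := (hsb n).1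
          have hsS := (hsb n).2
          have hcB : (lam * τ n + μ + ((k:ℝ) - 1) * ((k:ℝ) + α n + β - 2)) / ((k:ℝ) * (β + (k:ℝ) - 1))
              ≤ S + ((Kb:ℝ)+2)*((Kb:ℝ)+β+2) := by
            have h1 : (lam * τ n + μ + ((k:ℝ) - 1) * ((k:ℝ) + α n + β - 2)) / ((k:ℝ) * (β + (k:ℝ) - 1))
                ≤ lam * τ n + μ + ((k:ℝ) - 1) * ((k:ℝ) + α n + β - 2) := by
              apply div_le_self _ hD1
              nlinarith
            have h2 : ((k:ℝ) - 1) * ((k:ℝ) + α n + β - 2) ≤ ((Kb:ℝ)+2)*((Kb:ℝ)+β+2) := by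
              apply mul_le_mul (by linarith) (by linarith [hε1]) (by nlinarith) (by linarith)
            linarith
          have hdμ : μ / ((k:ℝ) * (β + (k:ℝ) - 1)) ≤ μ := div_le_self hμ.le hD1
          have hIH1 : |a n (k-1)| ≤ B ^ (k-1) := IH (k-1) (by omega) (by omega)
          have hIH2 : |a n (k-2)| ≤ B ^ (k-2) := IH (k-2) (by omega) (by omega)
          have hBmono : B ^ (k-2) ≤ B ^ (k-1) := pow_le_pow_right₀ hB1 (by omega)
          calc |a n k| ≤ _ * |a n (k-1)| + _ * |a n (k-2)| := habs
            _ ≤ (S + ((Kb:ℝ)+2)*((Kb:ℝ)+β+2)) * B^(k-1) + μ * B^(k-1) := by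
                apply add_le_add
                · exact mul_le_mul hcB hIH1 (abs_nonneg _) (by nlinarith)
                · exact mul_le_mul hdμ (hIH2.trans hBmono) (abs_nonneg _) hμ.le
            _ = (S + μ + ((Kb:ℝ)+2)*((Kb:ℝ)+β+2)) * B^(k-1) := by ring
            _ ≤ B * B^(k-1) := by
                apply mul_le_mul_of_nonneg_right (by rw [hB]; linarith) (by positivity)
            _ = B ^ k := by
                have hkk : k - 1 + 1 = k := by omega
                rw [← pow_succ', hkk]
  -- the constant
  refine ⟨B^Kb * ((Kb:ℝ)+1)^2, by positivity, N, fun n hn => ?_⟩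
  intro k
  induction k using Nat.strong_induction_on with
  | _ k IH =>
    intro hk1
    have hx1 : (1:ℝ) ≤ (k:ℝ) := by exact_mod_cast hk1
    by_cases hkK : k ≤ Kb
    · -- base regime
      have h1 : |a n k| ≤ B ^ Kb := (hbase n hn k hkK).trans (pow_le_pow_right₀ hB1 hkK)
      have h2 : (k:ℝ) ^ (2 - ε : ℝ) ≤ ((Kb:ℝ)+1)^2 := by
        calc (k:ℝ) ^ (2 - ε : ℝ) ≤ (k:ℝ) ^ (2:ℝ) :=
              Real.rpow_le_rpow_of_exponent_le hx1 (by linarith)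
          _ = (k:ℝ)^2 := Real.rpow_two _
          _ ≤ ((Kb:ℝ)+1)^2 := by
              apply pow_le_pow_left₀ (by linarith)
              have : (k:ℝ) ≤ (Kb:ℝ) := by exact_mod_cast hkK
              linarith
      have h3 : (((Kb:ℝ)+1)^2)⁻¹ ≤ (k:ℝ) ^ (-(2 - ε)) := by
        rw [Real.rpow_neg (by linarith)]
        exact inv_anti₀ (Real.rpow_pos_of_pos (by linarith) _) h2
      calc |a n k| ≤ B ^ Kb := h1
        _ = B^Kb * ((Kb:ℝ)+1)^2 * (((Kb:ℝ)+1)^2)⁻¹ := by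
            field_simp
        _ ≤ B^Kb * ((Kb:ℝ)+1)^2 * (k:ℝ) ^ (-(2 - ε)) := by
            exact mul_le_mul_of_nonneg_left h3 (by positivity)
    · -- inductive regime
      push_neg at hkK
      have hk7 : Kb + 1 ≤ k := hkK
      have hk2 : 2 ≤ k := by omega
      obtain ⟨hc0, hd0, habs⟩ := hcoef n hn k hk2
      have hx6 : (6:ℝ) ≤ (k:ℝ) := by exact_mod_cast (by omega : 6 ≤ k)
      have hxK : β + 8*(S+μ) ≤ 3*ε/4*(k:ℝ) := hKbR k (by omega)
      have hcast1 : ((k-1:ℕ):ℝ) = (k:ℝ) - 1 := by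
        rw [Nat.cast_sub (by omega)]; norm_num
      have hcast2 : ((k-2:ℕ):ℝ) = (k:ℝ) - 2 := by
        rw [Nat.cast_sub (by omega)]; norm_num
      have hIH1 : |a n (k-1)| ≤ B^Kb * ((Kb:ℝ)+1)^2 * ((k:ℝ)-1) ^ (-(2-ε)) := by
        have := IH (k-1) (by omega) (by omega)
        rwa [hcast1] at this
      have hIH2 : |a n (k-2)| ≤ B^Kb * ((Kb:ℝ)+1)^2 * ((k:ℝ)-2) ^ (-(2-ε)) := by
        have := IH (k-2) (by omega) (by omega)
        rwa [hcast2] at this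
      have hstep := step_ineq β μ ε (lam * τ n + μ) (α n) (k:ℝ) S hβ hμ hε0 hε1
        (hsb n).1 (hsb n).2 (hαpos n) (hN n hn) hx6 hxK
      set C : ℝ := B^Kb * ((Kb:ℝ)+1)^2 with hC
      have hC0 : 0 ≤ C := by positivity
      calc |a n k| ≤ _ * |a n (k-1)| + _ * |a n (k-2)| := habs
        _ ≤ (lam * τ n + μ + ((k:ℝ) - 1) * ((k:ℝ) + α n + β - 2)) / ((k:ℝ) * (β + (k:ℝ) - 1))
              * (C * ((k:ℝ)-1) ^ (-(2-ε)))
            + μ / ((k:ℝ) * (β + (k:ℝ) - 1)) * (C * ((k:ℝ)-2) ^ (-(2-ε))) :=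
            add_le_add (mul_le_mul_of_nonneg_left hIH1 hc0)
              (mul_le_mul_of_nonneg_left hIH2 hd0)
        _ = C * ((lam * τ n + μ + ((k:ℝ) - 1) * ((k:ℝ) + α n + β - 2)) / ((k:ℝ) * (β + (k:ℝ) - 1))
              * ((k:ℝ)-1) ^ (-(2-ε))
            + μ / ((k:ℝ) * (β + (k:ℝ) - 1)) * ((k:ℝ)-2) ^ (-(2-ε))) := by ring
        _ ≤ C * ((k:ℝ) ^ (-(2-ε))) := by
            apply mul_le_mul_of_nonneg_left _ hC0
            convert hstep using 3 <;> ring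
        _ = C * (k:ℝ) ^ (-(2-ε)) := rfl

theorem stmt7 (β μ lam : ℝ) (hβ : 1 < β) (hμ : 0 < μ) (hlam : 0 < lam)
    (τ α : ℕ → ℝ) (hτpos : ∀ n, 0 < τ n) (hαpos : ∀ n, 0 < α n)
    (hτ0 : Tendsto τ atTop (nhds 0)) (hα0 : Tendsto α atTop (nhds 0))
    (hτ1 : ∀ n, τ n < 1) (hsup : BddAbove (Set.range fun n => lam * τ n))
    (a : ℕ → ℕ → ℝ)
    (ha0 : ∀ n, a n 0 = 1)
    (ha1 : ∀ n, a n 1 = (lam * τ n + μ) / β)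
    (harec : ∀ n, ∀ k : ℕ, 2 ≤ k →
      a n k = (lam * τ n + μ + ((k:ℝ) - 1) * ((k:ℝ) + α n + β - 2)) / ((k:ℝ) * (β + (k:ℝ) - 1))
                * a n (k - 1)
              - μ / ((k:ℝ) * (β + (k:ℝ) - 1)) * a n (k - 2)) :
    ∀ ε > (0:ℝ), ∃ C > (0:ℝ), ∃ N : ℕ,
      ∀ n ≥ N, ∀ k : ℕ, 1 ≤ k → |a n k| ≤ C * (k:ℝ) ^ (-(2 - ε)) := by
  intro ε hε
  obtain ⟨C, hC0, N, hCN⟩ := main_aux β μ lam hβ hμ hlam τ α hτpos hαpos hα0 hτ1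
    a ha0 ha1 harec (min ε 1) (lt_min hε one_pos) (min_le_right _ _)
  refine ⟨C, hC0, N, fun n hn k hk1 => ?_⟩
  have hx1 : (1:ℝ) ≤ (k:ℝ) := by exact_mod_cast hk1
  calc |a n k| ≤ C * (k:ℝ) ^ (-(2 - min ε 1)) := hCN n hn k hk1
    _ ≤ C * (k:ℝ) ^ (-(2 - ε)) := by
        apply mul_le_mul_of_nonneg_left _ hC0.le
        apply Real.rpow_le_rpow_of_exponent_le hx1
        have := min_le_left ε (1:ℝ)
        linarith
end
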